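/- Let p be a prime, t ≥ 1 and m ≥ 1 integers, let ω be a Dirichlet character modulo p^t with values in ℂ, and let y ∈ (ZMod (p^t))ˣ. Then Σ_{χ} χ(y)⁻¹·τ(ω·χ)·τ(χ)^(m−1) = φ(p^t) · Σ_{(x₁,…,x_m) ∈ ((ZMod (p^t))ˣ)^m, x₁·x₂⋯x_m = y} ω(x₁)·e_{p^t}(x₁ + x₂ + … + x_m), where the outer sum on the left runs over ALL Dirichlet characters χ modulo p^t and φ is Euler's totient function. (This expresses the twisted hyper-Kloosterman sum KL_{ω,m+1} as a character sum of products of GL(1) Gauss sums.) -/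

import Mathlib

open Finset in
/-- Sum over `ZMod n` of a function vanishing on non-units equals a sum over units. -/
lemma sum_zmod_eq_sum_units {n : ℕ} [NeZero n] (f : ZMod n → ℂ)
    (hf : ∀ a, ¬IsUnit a → f a = 0) :
    ∑ a, f a = ∑ u : (ZMod n)ˣ, f u := by
  classical
  have h1 : ∑ a ∈ Finset.univ.image (fun u : (ZMod n)ˣ => (u : ZMod n)), f a
      = ∑ u : (ZMod n)ˣ, f u :=
    Finset.sum_image (by intro x _ y _ h; exact Units.ext h)
  rw [← h1]
  refine (Finset.sum_subset (Finset.subset_univ _) ?_).symm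
  intro x _ hx
  refine hf x fun h => hx ?_
  exact Finset.mem_image.mpr ⟨h.unit, Finset.mem_univ _, rfl⟩

open Finset in
lemma addChar_sum {A : Type*} [AddCommMonoid A] {ι : Type*} (ψ : AddChar A ℂ)
    (s : Finset ι) (g : ι → A) : ψ (∑ i ∈ s, g i) = ∏ i ∈ s, ψ (g i) := by
  classical
  induction s using Finset.cons_induction with
  | empty => simp
  | cons a s h ih => rw [Finset.sum_cons, Finset.prod_cons, ψ.map_add_eq_mul, ih]

open Finset in
/-- Twisted Duke–Iwaniec identity: for a Dirichlet character `ω` mod `p^t` and a unit `y`,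
`∑_χ χ(y)⁻¹ τ(ωχ) τ(χ)^(m-1) = φ(p^t) · ∑_{x₁⋯x_m = y} ω(x₁) e_{p^t}(x₁+⋯+x_m)`,
the sum on the left running over all Dirichlet characters mod `p^t`. -/
theorem sum_char_twisted_gauss_eq_twisted_kloosterman (p : ℕ) [Fact p.Prime] (t : ℕ)
    (ht : 1 ≤ t) (m : ℕ) (hm : 1 ≤ m) (ω : DirichletCharacter ℂ (p ^ t))
    (y : (ZMod (p ^ t))ˣ) :
    ∑ χ : DirichletCharacter ℂ (p ^ t),
        (χ (y : ZMod (p ^ t)))⁻¹ * gaussSum (ω * χ) ZMod.stdAddChar *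
          (gaussSum χ ZMod.stdAddChar) ^ (m - 1) =
      (Nat.totient (p ^ t) : ℂ) *
        ∑ x ∈ univ.filter (fun x : Fin m → (ZMod (p ^ t))ˣ => ∏ i, x i = y),
          ω ((x ⟨0, hm⟩ : ZMod (p ^ t))) * ZMod.stdAddChar (∑ i, (x i : ZMod (p ^ t))) := by
  classical
  haveI : NeZero (p ^ t) := ⟨pow_ne_zero t (Fact.out : p.Prime).pos.ne'⟩
  have hN : True := trivial
  set e : AddChar (ZMod (p ^ t)) ℂ := ZMod.stdAddChar with he
  -- Gauss sums as sums over units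
  have hgs : ∀ η : DirichletCharacter ℂ (p ^ t), gaussSum η e =
      ∑ u : (ZMod (p ^ t))ˣ, η u * e (u : ZMod (p ^ t)) := fun η =>
    sum_zmod_eq_sum_units _ (fun a ha => by rw [η.map_nonunit ha, zero_mul])
  set i0 : Fin m := ⟨0, hm⟩ with hi0
  -- Expand the product of Gauss sums
  have key : ∀ χ : DirichletCharacter ℂ (p ^ t),
      gaussSum (ω * χ) e * gaussSum χ e ^ (m - 1) =
      ∑ x : Fin m → (ZMod (p ^ t))ˣ, ω ((x i0 : ZMod (p ^ t))) * χ ((∏ i, x i : (ZMod (p ^ t))ˣ) : ZMod (p ^ t))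
        * e (∑ i, (x i : ZMod (p ^ t))) := by
    intro χ
    have step1 : gaussSum (ω * χ) e * gaussSum χ e ^ (m - 1) =
        ∏ i : Fin m, ∑ u : (ZMod (p ^ t))ˣ,
          (if i = i0 then ω (u : ZMod (p ^ t)) else 1) * (χ (u : ZMod (p ^ t)) * e (u : ZMod (p ^ t))) := by
      rw [← Finset.mul_prod_erase Finset.univ _ (Finset.mem_univ i0)]
      congr 1
      · rw [hgs]
        refine Finset.sum_congr rfl fun u _ => ?_
        simp [MulChar.mul_apply, mul_assoc]
      · have h2 : ∀ i ∈ Finset.univ.erase i0,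
            (∑ u : (ZMod (p ^ t))ˣ,
              (if i = i0 then ω (u : ZMod (p ^ t)) else 1) *
                (χ (u : ZMod (p ^ t)) * e (u : ZMod (p ^ t)))) = gaussSum χ e := by
          intro i hi
          rw [hgs]
          exact Finset.sum_congr rfl fun u _ => by
            rw [if_neg (Finset.mem_erase.mp hi).1, one_mul]
        rw [Finset.prod_congr rfl h2, Finset.prod_const,
          Finset.card_erase_of_mem (Finset.mem_univ i0), Finset.card_univ, Fintype.card_fin]
    rw [step1, Finset.prod_univ_sum]
    rw [Fintype.piFinset_univ]
    refine Finset.sum_congr rfl fun x _ => ?_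
    rw [Finset.prod_mul_distrib, Finset.prod_mul_distrib, Finset.prod_ite_eq' Finset.univ i0
      (fun i => ω ((x i : ZMod (p ^ t)))), if_pos (Finset.mem_univ i0)]
    rw [← addChar_sum e Finset.univ (fun i => (x i : ZMod (p ^ t))), ← map_prod χ, mul_assoc]
    congr 2
    push_cast
    rfl
  -- inverse of character value
  have hinv : ∀ χ : DirichletCharacter ℂ (p ^ t), (χ (y : ZMod (p ^ t)))⁻¹ = χ ((y : ZMod (p ^ t))⁻¹) := by
    intro χ
    refine (inv_eq_of_mul_eq_one_right ?_).symm.symm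
    rw [ZMod.inv_coe_unit, ← map_mul, ← Units.val_mul, mul_inv_cancel, Units.val_one, map_one]
  calc
    ∑ χ : DirichletCharacter ℂ (p ^ t), (χ (y : ZMod (p ^ t)))⁻¹ * gaussSum (ω * χ) e
        * gaussSum χ e ^ (m - 1)
      = ∑ χ : DirichletCharacter ℂ (p ^ t), ∑ x : Fin m → (ZMod (p ^ t))ˣ,
          (χ ((y : ZMod (p ^ t))⁻¹) * χ ((∏ i, x i : (ZMod (p ^ t))ˣ) : ZMod (p ^ t))) *
            (ω ((x i0 : ZMod (p ^ t))) * e (∑ i, (x i : ZMod (p ^ t)))) := by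
        refine Finset.sum_congr rfl fun χ _ => ?_
        rw [mul_assoc, key χ, hinv χ, Finset.mul_sum]
        refine Finset.sum_congr rfl fun x _ => ?_
        ring
    _ = ∑ x : Fin m → (ZMod (p ^ t))ˣ,
          (∑ χ : DirichletCharacter ℂ (p ^ t),
            χ ((y : ZMod (p ^ t))⁻¹) * χ ((∏ i, x i : (ZMod (p ^ t))ˣ) : ZMod (p ^ t))) *
            (ω ((x i0 : ZMod (p ^ t))) * e (∑ i, (x i : ZMod (p ^ t)))) := by
        rw [Finset.sum_comm]
        exact Finset.sum_congr rfl fun x _ => (Finset.sum_mul _ _ _).symm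
    _ = ∑ x : Fin m → (ZMod (p ^ t))ˣ,
          (if (y : ZMod (p ^ t)) = ((∏ i, x i : (ZMod (p ^ t))ˣ) : ZMod (p ^ t)) then ((p ^ t).totient : ℂ) else 0) *
            (ω ((x i0 : ZMod (p ^ t))) * e (∑ i, (x i : ZMod (p ^ t)))) := by
        refine Finset.sum_congr rfl fun x _ => ?_
        rw [DirichletCharacter.sum_char_inv_mul_char_eq ℂ y.isUnit]
    _ = ((p ^ t).totient : ℂ) * ∑ x ∈ univ.filter (fun x : Fin m → (ZMod (p ^ t))ˣ => ∏ i, x i = y),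
          ω ((x i0 : ZMod (p ^ t))) * e (∑ i, (x i : ZMod (p ^ t))) := by
        rw [Finset.mul_sum, Finset.sum_filter]
        refine Finset.sum_congr rfl fun x _ => ?_
        have : ((y : ZMod (p ^ t)) = ((∏ i, x i : (ZMod (p ^ t))ˣ) : ZMod (p ^ t))) ↔ (∏ i, x i = y) := by
          rw [eq_comm, ← Units.val_inj]
        by_cases h : ∏ i, x i = y
        · rw [if_pos (this.mpr h), if_pos h]
        · rw [if_neg (fun hc => h (this.mp hc)), if_neg h, zero_mul]
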